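/- Let n, k ≥ 2 and let φ be a reflection on (ℂⁿ,0) of order k. Then there exists a k-fold f on (ℂⁿ,0) associated with φ, i.e. satisfying f ∘ φ = f as germs. -/

import Mathlib

noncomputable section

open Filter Function

/-- ℂⁿ as the space of functions `Fin n → ℂ`. -/
abbrev Cn (n : ℕ) : Type := Fin n → ℂ

/-- Equality of germs at 0 of maps (ℂⁿ,0) → (ℂⁿ,0). -/
def GermEq {n : ℕ} (f g : Cn n → Cn n) : Prop := f =ᶠ[nhds 0] g

/-- Germ at 0 of a holomorphic map (ℂⁿ,0) → (ℂⁿ,0): holomorphic on a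
neighborhood of 0 and sending 0 to 0. -/
def IsHoloGerm {n : ℕ} (f : Cn n → Cn n) : Prop :=
  f 0 = 0 ∧ ∀ᶠ x in nhds (0 : Cn n), AnalyticAt ℂ f x

/-- Germ of biholomorphism on (ℂⁿ,0): holomorphic germ with invertible
derivative at 0. -/
def IsBiholGerm {n : ℕ} (h : Cn n → Cn n) : Prop :=
  IsHoloGerm h ∧ IsUnit (fderiv ℂ h 0)

/-- φ has order exactly r as a germ at 0 (φ^[r] = id as germs, r minimal). -/
def HasOrderGerm {n : ℕ} (φ : Cn n → Cn n) (r : ℕ) : Prop :=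
  GermEq (φ^[r]) id ∧ ∀ m : ℕ, 0 < m → m < r → ¬ GermEq (φ^[m]) id

/-- The fixed-point set of φ near 0 is a complex submanifold of codimension 1:
locally the zero set of a holomorphic submersion F : (ℂⁿ,0) → (ℂ,0). -/
def FixIsHypersurface {n : ℕ} (φ : Cn n → Cn n) : Prop :=
  ∃ F : Cn n → ℂ, F 0 = 0 ∧ AnalyticAt ℂ F 0 ∧ fderiv ℂ F 0 ≠ 0 ∧
    ∀ᶠ x in nhds (0 : Cn n), (φ x = x ↔ F x = 0)

/-- A reflection on (ℂⁿ,0): germ of biholomorphism of finite order ≥ 2 whose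
fixed-point set is a codimension-1 complex submanifold. -/
def IsReflection {n : ℕ} (φ : Cn n → Cn n) : Prop :=
  IsBiholGerm φ ∧ (∃ r : ℕ, 2 ≤ r ∧ HasOrderGerm φ r) ∧ FixIsHypersurface φ

/-- A reflection of order exactly k. -/
def IsReflectionOfOrder {n : ℕ} (φ : Cn n → Cn n) (k : ℕ) : Prop :=
  IsBiholGerm φ ∧ HasOrderGerm φ k ∧ FixIsHypersurface φ

/-- The canonical k-fold f₁(x) = (x₁^k, x₂, …, xₙ). -/
def canonFold (n k : ℕ) : Cn n → Cn n := fun x i => if (i : ℕ) = 0 then x i ^ k else x i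

/-- The canonical reflection φ₁(x) = (λ x₁, x₂, …, xₙ) with λ = e^{2πi/k}. -/
def canonRefl (n k : ℕ) : Cn n → Cn n :=
  fun x i => if (i : ℕ) = 0 then Complex.exp (2 * (Real.pi : ℂ) * Complex.I / (k : ℂ)) * x i
    else x i

/-- f is a k-fold: a holomorphic germ 𝒜-equivalent to the canonical k-fold,
i.e. f = l ∘ f₁ ∘ h⁻¹ as germs for germs of biholomorphisms h, l
(equivalently, f ∘ h = l ∘ f₁ as germs). -/
def IsKFold {n : ℕ} (k : ℕ) (f : Cn n → Cn n) : Prop :=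
  IsHoloGerm f ∧ ∃ h l : Cn n → Cn n, IsBiholGerm h ∧ IsBiholGerm l ∧
    GermEq (f ∘ h) (l ∘ canonFold n k)

/-- The canonical k-fold in the i-th coordinate: fᵢ(x) = (x₁, …, xᵢ^k, …, xₙ). -/
def foldAt (n k : ℕ) (i : Fin n) : Cn n → Cn n := fun x j => if j = i then x j ^ k else x j

lemma exists_local_inverse {n : ℕ} {g : Cn n → Cn n} (hg0 : g 0 = 0) (hga : AnalyticAt ℂ g 0)
    (e : Cn n ≃L[ℂ] Cn n) (hd : fderiv ℂ g 0 = (e : Cn n →L[ℂ] Cn n)) :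
    ∃ h : Cn n → Cn n, IsBiholGerm h ∧ (∀ᶠ z in nhds (0:Cn n), g (h z) = z)
      ∧ (∀ᶠ x in nhds (0:Cn n), h (g x) = x) := by
  have hs : HasStrictFDerivAt g (e : Cn n →L[ℂ] Cn n) 0 := hd ▸ hga.hasStrictFDerivAt
  set PH := hs.toOpenPartialHomeomorph g with hPH
  have hcoe : ⇑PH = g := hs.toOpenPartialHomeomorph_coe
  have hsrc : (0:Cn n) ∈ PH.source := hs.mem_toOpenPartialHomeomorph_source
  have htgt : (0:Cn n) ∈ PH.target := by
    have := hs.image_mem_toOpenPartialHomeomorph_target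
    rwa [hg0] at this
  have hrt : ∀ᶠ z in nhds (0:Cn n), g (PH.symm z) = z := by
    filter_upwards [PH.open_target.mem_nhds htgt] with z hz
    rw [← hcoe]; exact PH.right_inv hz
  have hlt : ∀ᶠ x in nhds (0:Cn n), PH.symm (g x) = x := by
    filter_upwards [PH.open_source.mem_nhds hsrc] with x hx
    rw [← hcoe]; exact PH.left_inv hx
  have hsym0 : PH.symm 0 = 0 := by
    have := PH.left_inv hsrc; rw [hcoe, hg0] at this; exact this
  have hana : AnalyticAt ℂ PH.symm 0 := by
    have := PH.analyticAt_symm' (𝕜 := ℂ) hsrc (i := e) (show AnalyticAt ℂ (⇑PH) 0 by rwa [hcoe])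
      (show fderiv ℂ (⇑PH) 0 = ↑e by rw [hcoe]; exact hd)
    rwa [hcoe, hg0] at this
  have hgd : HasFDerivAt g (e : Cn n →L[ℂ] Cn n) 0 := hs.hasFDerivAt
  have hhd : DifferentiableAt ℂ PH.symm 0 := hana.differentiableAt
  set B := fderiv ℂ PH.symm 0 with hB
  have h1 : (e : Cn n →L[ℂ] Cn n) * B = 1 := by
    have he : (fun z => g (PH.symm z)) =ᶠ[nhds (0:Cn n)] id := by
      filter_upwards [hrt] with z hz using hz
    have e1 := he.fderiv_eq (𝕜 := ℂ)
    rw [fderiv_id] at e1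
    have h2 : HasFDerivAt (fun z => g (PH.symm z)) ((e : Cn n →L[ℂ] Cn n).comp B) 0 := by
      have hg' : HasFDerivAt g (e : Cn n →L[ℂ] Cn n) (PH.symm 0) := by rw [hsym0]; exact hgd
      exact hg'.comp 0 hhd.hasFDerivAt
    rw [h2.fderiv] at e1
    rw [ContinuousLinearMap.mul_def, e1, ContinuousLinearMap.one_def]
  have h2 : B * (e : Cn n →L[ℂ] Cn n) = 1 := by
    have he : (fun x => PH.symm (g x)) =ᶠ[nhds (0:Cn n)] id := by
      filter_upwards [hlt] with x hx using hx
    have e1 := he.fderiv_eq (𝕜 := ℂ)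
    rw [fderiv_id] at e1
    have h2' : HasFDerivAt (fun x => PH.symm (g x)) (B.comp (e : Cn n →L[ℂ] Cn n)) 0 := by
      have hh' : HasFDerivAt PH.symm B (g 0) := by
        rw [hg0]; exact hhd.hasFDerivAt
      exact hh'.comp 0 hgd
    rw [h2'.fderiv] at e1
    rw [ContinuousLinearMap.mul_def, e1, ContinuousLinearMap.one_def]
  refine ⟨PH.symm, ⟨⟨hsym0, hana.eventually_analyticAt⟩, ?_⟩, hrt, hlt⟩
  exact ⟨⟨B, (e : Cn n →L[ℂ] Cn n), h2, h1⟩, rfl⟩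


set_option maxHeartbeats 2000000

/-- Proposition 2.10: for any reflection φ of order k there is a
k-fold associated with φ. -/
theorem stmt_5 (n k : ℕ) (hn : 2 ≤ n) (hk : 2 ≤ k)
    (φ : Cn n → Cn n) (hφ : IsReflectionOfOrder φ k) :
    ∃ f : Cn n → Cn n, IsKFold k f ∧ GermEq (f ∘ φ) f := by
  classical
  obtain ⟨⟨⟨hφ0, hφe⟩, hφdu⟩, hord, hfix⟩ := hφ
  obtain ⟨m, rfl⟩ : ∃ m, k = m + 2 := ⟨k - 2, by omega⟩
  obtain ⟨p, rfl⟩ : ∃ p, n = p + 2 := ⟨n - 2, by omega⟩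
  have hφa : AnalyticAt ℂ φ 0 := hφe.self_of_nhds
  have hordk : φ^[m+2] =ᶠ[nhds (0:Cn (p+2))] id := hord.1
  set A := fderiv ℂ φ 0 with hA
  have hφd : HasFDerivAt φ A 0 := hφa.differentiableAt.hasFDerivAt
  have hiter0 : ∀ j, φ^[j] 0 = 0 := fun j => Function.iterate_fixed hφ0 j
  have hitera : ∀ j, AnalyticAt ℂ (φ^[j]) 0 := by
    intro j; induction j with
    | zero => exact analyticAt_id
    | succ j ih =>
      rw [Function.iterate_succ]
      exact AnalyticAt.comp (show AnalyticAt ℂ (φ^[j]) (φ 0) by rw [hφ0]; exact ih) hφa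
  have hiterd : ∀ j, HasFDerivAt (φ^[j]) (A^j) 0 := by
    intro j; induction j with
    | zero =>
      simpa [pow_zero, ContinuousLinearMap.one_def] using hasFDerivAt_id (𝕜 := ℂ) (0:Cn (p+2))
    | succ j ih =>
      rw [Function.iterate_succ, pow_succ]
      have h1 : HasFDerivAt (φ^[j]) (A^j) (φ 0) := by rw [hφ0]; exact ih
      have := h1.comp 0 hφd
      simpa [ContinuousLinearMap.mul_def] using this
  have hAk : A ^ (m+2) = 1 := by
    have hfd := hordk.fderiv_eq (𝕜 := ℂ)
    rw [(hiterd (m+2)).fderiv, fderiv_id] at hfd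
    rw [hfd, ContinuousLinearMap.one_def]
  set C := A ^ (m+1) with hC
  have hAC : A * C = 1 := by rw [hC, ← pow_succ']; exact hAk
  set ψ : Cn (p+2) → Cn (p+2) :=
    fun x => ((m+2:ℕ):ℂ)⁻¹ • ∑ j ∈ Finset.range (m+2), (C^j) (φ^[j] x) with hψdef
  have hψ0 : ψ 0 = 0 := by
    simp only [hψdef]
    rw [Finset.sum_eq_zero fun j _ => by rw [hiter0 j, map_zero], smul_zero]
  have hψa : AnalyticAt ℂ ψ 0 := by
    apply AnalyticAt.smul (analyticAt_const (v := ((m+2:ℕ):ℂ)⁻¹))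
    apply Finset.analyticAt_fun_sum
    intro j _
    exact AnalyticAt.comp (by rw [hiter0 j]; exact (C^j).analyticAt _) (hitera j)
  have hψd : HasFDerivAt ψ (ContinuousLinearMap.id ℂ (Cn (p+2))) 0 := by
    have hterm : ∀ j, HasFDerivAt (fun x => (C^j) (φ^[j] x)) ((C^j).comp (A^j)) 0 := by
      intro j
      have h1 : HasFDerivAt (⇑(C^j)) (C^j) (φ^[j] 0) := (C^j).hasFDerivAt
      exact h1.comp 0 (hiterd j)
    have hsum := HasFDerivAt.fun_sum (u := Finset.range (m+2))
      (A' := fun j => (C^j).comp (A^j)) (fun j _ => hterm j)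
    have h2 := hsum.const_smul (((m+2:ℕ):ℂ)⁻¹)
    have h3 : (((m+2:ℕ):ℂ)⁻¹ • ∑ j ∈ Finset.range (m+2), (C^j).comp (A^j))
        = ContinuousLinearMap.id ℂ (Cn (p+2)) := by
      have hcj : ∀ j, (C^j).comp (A^j) = (1 : Cn (p+2) →L[ℂ] Cn (p+2)) := by
        intro j
        rw [← ContinuousLinearMap.mul_def, hC, ← pow_mul, ← pow_add]
        have h4 : (m+1) * j + j = (m+2) * j := by ring
        rw [h4, pow_mul, hAk, one_pow]
      rw [Finset.sum_congr rfl fun j _ => hcj j, Finset.sum_const, Finset.card_range,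
        ← Nat.cast_smul_eq_nsmul ℂ, smul_smul,
        inv_mul_cancel₀ (Nat.cast_ne_zero.mpr (by omega)), one_smul,
        ContinuousLinearMap.one_def]
    rw [← h3]
    exact h2
  have hψφ : ∀ᶠ x in nhds (0:Cn (p+2)), ψ (φ x) = A (ψ x) := by
    filter_upwards [hordk] with x hx
    have hx' : φ^[m+2] x = x := hx
    have key : ∑ j ∈ Finset.range (m+2), (C^j) (φ^[j+1] x)
        = ∑ j ∈ Finset.range (m+2), A ((C^j) (φ^[j] x)) := by
      have hL := Finset.sum_range_succ (fun j => (C^j) (φ^[j+1] x)) (m+1)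
      have hR := Finset.sum_range_succ' (fun j => A ((C^j) (φ^[j] x))) (m+1)
      rw [hL, hR]
      congr 1
      · apply Finset.sum_congr rfl
        intro j _
        have h6 : A * C^(j+1) = C^j := by
          rw [pow_succ' C j, ← mul_assoc, hAC, one_mul]
        calc (C^j) (φ^[j+1] x) = (A * C^(j+1)) (φ^[j+1] x) := by rw [h6]
          _ = A ((C^(j+1)) (φ^[j+1] x)) := by rw [ContinuousLinearMap.mul_apply]
      · have hx'' : φ^[m+1+1] x = x := hx'
        rw [hx'']
        have hCm : C^(m+1) = A := by
          rw [hC, ← pow_mul]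
          have h5 : (m+1)*(m+1) = (m+2)*m + 1 := by ring
          rw [h5, pow_add, pow_mul, hAk, one_pow, one_mul, pow_one]
        rw [hCm]
        simp
    have e1 : ψ (φ x) = ((m+2:ℕ):ℂ)⁻¹ • ∑ j ∈ Finset.range (m+2), (C^j) (φ^[j+1] x) := by
      simp only [hψdef, ← Function.iterate_succ_apply]
    have e2 : A (ψ x) = ((m+2:ℕ):ℂ)⁻¹ • ∑ j ∈ Finset.range (m+2), A ((C^j) (φ^[j] x)) := by
      simp only [hψdef, map_smul, map_sum]
    rw [e1, e2, key]
  -- A is not the identity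
  have hAne : A ≠ 1 := by
    intro hA1
    obtain ⟨h, _, _, hleft⟩ := exists_local_inverse hψ0 hψa
      (ContinuousLinearEquiv.refl ℂ (Cn (p+2))) (by rw [hψd.fderiv]; rfl)
    have hφc : Filter.Tendsto φ (nhds 0) (nhds (0:Cn (p+2))) := by
      have := hφa.continuousAt.tendsto
      rwa [hφ0] at this
    have hφid : φ =ᶠ[nhds (0:Cn (p+2))] id := by
      filter_upwards [hψφ, hφc.eventually hleft, hleft] with x h1 h2 h3
      -- h2 : h (ψ (φ x)) = φ x, h1 : ψ (φ x) = A (ψ x), h3 : h (ψ x) = x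
      rw [h1, hA1, ContinuousLinearMap.one_apply, h3] at h2
      exact h2.symm
    exact hord.2 1 one_pos (by omega) (by rw [Function.iterate_one]; exact hφid)
  -- the fixed subspace
  set U : Submodule ℂ (Cn (p+2)) :=
    LinearMap.ker ((A : Cn (p+2) →ₗ[ℂ] Cn (p+2)) - LinearMap.id) with hU
  have hUmem : ∀ x, x ∈ U ↔ A x = x := by
    intro x
    rw [hU, LinearMap.mem_ker, LinearMap.sub_apply, LinearMap.id_apply, sub_eq_zero]
    exact Iff.rfl
  -- geometry: finrank U = p + 1
  obtain ⟨F, hF0, hFa, hdF, hiff⟩ := hfix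
  have hUfr' : Module.finrank ℂ U = p + 1 := by
    set f' := fderiv ℂ F 0 with hf'
    have hsurj : LinearMap.range (f' : Cn (p+2) →ₗ[ℂ] ℂ) = ⊤ := by
      rw [Submodule.eq_top_iff']
      intro y
      have hex : ∃ x, f' x ≠ 0 := by
        by_contra hcon; push_neg at hcon
        exact hdF (ContinuousLinearMap.ext fun x => by simp [hcon x])
      obtain ⟨x₀, hx₀⟩ := hex
      refine ⟨(y / f' x₀) • x₀, ?_⟩
      rw [map_smul, smul_eq_mul, ContinuousLinearMap.coe_coe, div_mul_cancel₀ _ hx₀]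
    have hFs : HasStrictFDerivAt F f' 0 := hFa.hasStrictFDerivAt
    set K := LinearMap.ker (f' : Cn (p+2) →ₗ[ℂ] ℂ) with hK
    set g : K → Cn (p+2) := fun y => hFs.implicitFunction F f' hsurj 0 y with hg
    have hgd : HasStrictFDerivAt g K.subtypeL 0 := by
      have := hFs.to_implicitFunction hsurj
      rw [hF0] at this
      exact this
    have hg0 : g 0 = 0 := by
      have := hFs.implicitFunction_apply_image hsurj
      rw [hF0] at this
      exact this
    have hFg : ∀ᶠ y in nhds (0:K), F (g y) = 0 := by
      have hmap := hFs.map_implicitFunction_eq hsurj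
      rw [hF0] at hmap
      have ht : Filter.Tendsto (fun y : K => ((0:ℂ), y)) (nhds 0) (nhds ((0:ℂ), (0:K))) :=
        tendsto_const_nhds.prodMk_nhds tendsto_id
      exact ht.eventually hmap
    have hgc : Filter.Tendsto g (nhds 0) (nhds (0:Cn (p+2))) := by
      have := hgd.continuousAt.tendsto
      rwa [hg0] at this
    have hφg : ∀ᶠ y in nhds (0:K), φ (g y) = g y := by
      filter_upwards [hgc.eventually hiff, hFg] with y h1 h2
      exact h1.mpr h2
    have hcomp : (fun y : K => φ (g y)) =ᶠ[nhds 0] g := hφg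
    have hd1 : HasFDerivAt (fun y : K => φ (g y)) (A.comp K.subtypeL) 0 := by
      have h2 : HasFDerivAt φ A (g 0) := by rw [hg0]; exact hφd
      exact h2.comp 0 hgd.hasFDerivAt
    have hsubeq : A.comp K.subtypeL = K.subtypeL := by
      have e1 := hcomp.fderiv_eq (𝕜 := ℂ)
      rw [hd1.fderiv, hgd.hasFDerivAt.fderiv] at e1
      exact e1
    have hKU : K ≤ U := by
      intro w hw
      rw [hUmem]
      have := DFunLike.congr_fun hsubeq (⟨w, hw⟩ : K)
      simpa using this
    have hrkK : Module.finrank ℂ K + 1 = p + 2 := by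
      have h1 := LinearMap.finrank_range_add_finrank_ker (f' : Cn (p+2) →ₗ[ℂ] ℂ)
      have h2 : LinearMap.range (f' : Cn (p+2) →ₗ[ℂ] ℂ) = ⊤ := hsurj
      have h3 : LinearMap.ker (f' : Cn (p+2) →ₗ[ℂ] ℂ) = K := rfl
      rw [h2, h3, finrank_top, Module.finrank_self, Module.finrank_fin_fun] at h1
      omega
    have hUne : U ≠ ⊤ := by
      intro hUtop
      apply hAne
      apply ContinuousLinearMap.ext
      intro x
      have : x ∈ U := hUtop ▸ Submodule.mem_top
      rw [(hUmem x).mp this, ContinuousLinearMap.one_apply]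
    have h1 : Module.finrank ℂ K ≤ Module.finrank ℂ U := Submodule.finrank_mono hKU
    have h2 : Module.finrank ℂ U < p + 2 := by
      have := Submodule.finrank_lt (K := ℂ) (V := Cn (p+2)) hUne
      rwa [Module.finrank_fin_fun] at this
    omega
  -- linear algebra: conjugate A to a diagonal reflection
  obtain ⟨Lc, lam, hlamk, hAL⟩ :
      ∃ (Lc : Cn (p+2) ≃L[ℂ] Cn (p+2)) (lam : ℂ), lam ^ (m+2) = 1 ∧
        ∀ c, A (Lc c) = Lc (fun i => if (i:ℕ) = 0 then lam * c i else c i) := by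
    set Q : Cn (p+2) →L[ℂ] Cn (p+2) := ∑ j ∈ Finset.range (m+2), A^j with hQ
    have hAQ : A * Q = Q := by
      rw [hQ, Finset.mul_sum]
      have h1 : ∀ j, A * A^j = A^(j+1) := fun j => (pow_succ' A j).symm
      rw [Finset.sum_congr rfl fun j _ => h1 j]
      have hL := Finset.sum_range_succ (fun j => A^(j+1)) (m+1)
      have hR := Finset.sum_range_succ' (fun j => A^j) (m+1)
      rw [hL, hR]
      have hx'' : A^(m+1+1) = A^(m+2) := rfl
      rw [hx'', hAk, pow_zero]
    have hQA : Q * A = Q := by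
      rw [hQ, Finset.sum_mul]
      have h1 : ∀ j, A^j * A = A^(j+1) := fun j => (pow_succ A j).symm
      rw [Finset.sum_congr rfl fun j _ => h1 j]
      have hL := Finset.sum_range_succ (fun j => A^(j+1)) (m+1)
      have hR := Finset.sum_range_succ' (fun j => A^j) (m+1)
      rw [hL, hR]
      have hx'' : A^(m+1+1) = A^(m+2) := rfl
      rw [hx'', hAk, pow_zero]
    have hpowQ : ∀ j, A^j * Q = Q := by
      intro j; induction j with
      | zero => rw [pow_zero, one_mul]
      | succ j ih => rw [pow_succ, mul_assoc, hAQ, ih]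
    have hQQ : Q * Q = (m+2) • Q := by
      nth_rewrite 1 [hQ]
      rw [Finset.sum_mul, Finset.sum_congr rfl fun j _ => hpowQ j, Finset.sum_const,
        Finset.card_range]
    set c : ℂ := ((m+2:ℕ):ℂ)⁻¹ with hc
    have hcne : ((m+2:ℕ):ℂ) ≠ 0 := Nat.cast_ne_zero.mpr (by omega)
    set P : Cn (p+2) →L[ℂ] Cn (p+2) := c • Q with hP
    have hPA : ∀ x, P (A x) = P x := by
      intro x
      rw [hP]
      simp only [ContinuousLinearMap.smul_apply]
      rw [← ContinuousLinearMap.mul_apply, hQA]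
    have hAP : ∀ x, A (P x) = P x := by
      intro x
      rw [hP]
      simp only [ContinuousLinearMap.smul_apply, map_smul]
      rw [← ContinuousLinearMap.mul_apply A Q, hAQ]
    have hPP : ∀ x, P (P x) = P x := by
      intro x
      rw [hP]
      simp only [ContinuousLinearMap.smul_apply, map_smul]
      rw [← ContinuousLinearMap.mul_apply Q Q, hQQ]
      simp only [ContinuousLinearMap.smul_apply, ContinuousLinearMap.coe_smul', Pi.smul_apply,
        smul_smul]
      rw [← Nat.cast_smul_eq_nsmul ℂ, smul_smul]
      congr 1
      rw [hc]
      field_simp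
    have hPmem : ∀ x, P x ∈ U := fun x => (hUmem _).mpr (hAP x)
    have hfixP : ∀ x, A x = x → P x = x := by
      intro x hx
      have hj : ∀ j, (A^j) x = x := by
        intro j; induction j with
        | zero => simp
        | succ j ih => rw [pow_succ', ContinuousLinearMap.mul_apply, ih, hx]
      rw [hP]
      simp only [ContinuousLinearMap.smul_apply]
      rw [hQ, ContinuousLinearMap.sum_apply, Finset.sum_congr rfl fun j _ => hj j,
        Finset.sum_const, Finset.card_range, ← Nat.cast_smul_eq_nsmul ℂ, smul_smul, hc,
        inv_mul_cancel₀ hcne, one_smul]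
    obtain ⟨x₀, hx₀⟩ : ∃ x, A x ≠ x := by
      by_contra hcon; push_neg at hcon
      exact hAne (ContinuousLinearMap.ext fun x => by simpa using hcon x)
    set v : Cn (p+2) := x₀ - P x₀ with hv
    have hvP : P v = 0 := by rw [hv, map_sub, hPP, sub_self]
    have hv0 : v ≠ 0 := by
      intro h
      rw [hv, sub_eq_zero] at h
      exact hx₀ (by rw [h, hAP])
    set Pl := (P : Cn (p+2) →ₗ[ℂ] Cn (p+2)) with hPl
    have hrangeP : LinearMap.range Pl = U := by
      apply le_antisymm
      · rintro _ ⟨x, rfl⟩; exact hPmem x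
      · intro x hx; exact ⟨x, hfixP x ((hUmem x).mp hx)⟩
    have hkerfr : Module.finrank ℂ (LinearMap.ker Pl) = 1 := by
      have h1 := LinearMap.finrank_range_add_finrank_ker Pl
      rw [hrangeP, Module.finrank_fin_fun, hUfr'] at h1
      omega
    have hvker : v ∈ LinearMap.ker Pl := by
      rw [LinearMap.mem_ker]; exact hvP
    have hkerspan : LinearMap.ker Pl = Submodule.span ℂ {v} := by
      symm
      apply Submodule.eq_of_le_of_finrank_eq
      · rw [Submodule.span_le, Set.singleton_subset_iff]; exact hvker
      · rw [finrank_span_singleton hv0, hkerfr]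
    have hAv_mem : A v ∈ LinearMap.ker Pl := by
      rw [LinearMap.mem_ker]
      show P (A v) = 0
      rw [hPA, hvP]
    rw [hkerspan] at hAv_mem
    obtain ⟨lam, hlam⟩ := Submodule.mem_span_singleton.mp hAv_mem
    have hAvlam : A v = lam • v := hlam.symm
    have hAjv : ∀ j, (A^j) v = lam^j • v := by
      intro j; induction j with
      | zero => simp
      | succ j ih =>
        rw [pow_succ', ContinuousLinearMap.mul_apply, ih, map_smul, hAvlam, smul_smul,
          pow_succ]
    have hlamk : lam^(m+2) = 1 := by
      have h1 : (A^(m+2)) v = v := by rw [hAk]; simp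
      rw [hAjv] at h1
      have h2 : (lam^(m+2) - 1) • v = 0 := by
        rw [sub_smul, one_smul, h1, sub_self]
      rcases smul_eq_zero.mp h2 with h | h
      · exact sub_eq_zero.mp h
      · exact absurd h hv0
    have hsp : ∀ z : Cn (p+2), ∃ a : ℂ, z + a • v ∈ U := by
      intro z
      have hz : z - P z ∈ LinearMap.ker Pl := by
        rw [LinearMap.mem_ker]
        show P (z - P z) = 0
        rw [map_sub, hPP, sub_self]
      rw [hkerspan] at hz
      obtain ⟨a, ha⟩ := Submodule.mem_span_singleton.mp hz
      refine ⟨-a, ?_⟩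
      have hzz : z + (-a) • v = P z := by
        rw [neg_smul, ha]
        abel
      rw [hzz]
      exact hPmem z
    have hli : ∀ a : ℂ, ∀ x ∈ U, a • v + x = 0 → a = 0 := by
      intro a x hx h
      have h2 : P (a • v + x) = 0 := by rw [h, map_zero]
      rw [map_add, map_smul, hvP, smul_zero, zero_add, hfixP x ((hUmem x).mp hx)] at h2
      rw [h2, add_zero] at h
      rcases smul_eq_zero.mp h with h | h
      · exact h
      · exact absurd h hv0
    set bU : Module.Basis (Fin (p+1)) ℂ U := (Module.finBasis ℂ U).reindex (finCongr hUfr') with hbU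
    set b : Module.Basis (Fin (p+2)) ℂ (Cn (p+2)) := Module.Basis.mkFinCons v bU hli hsp with hb
    have hbcoe : ⇑b = Fin.cons v (U.subtype ∘ bU) := by
      rw [hb]; exact Module.Basis.coe_mkFinCons v bU hli hsp
    set L : (Fin (p+2) → ℂ) ≃ₗ[ℂ] Cn (p+2) := b.equivFun.symm with hL
    have hAL : ∀ c', A (L c') = L (fun i => if (i:ℕ) = 0 then lam * c' i else c' i) := by
      intro c'
      rw [hL]
      simp only [Module.Basis.equivFun_symm_apply]
      rw [map_sum]
      refine Finset.sum_congr rfl fun i _ => ?_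
      rw [map_smul]
      refine Fin.cases ?_ ?_ i
      · have hb0 : b 0 = v := by rw [hbcoe]; exact Fin.cons_zero _ _
        simp only [Fin.val_zero, ↓reduceIte, hb0, hAvlam, smul_smul]
        rw [mul_comm]
      · intro i
        have hbs : b i.succ ∈ U := by
          rw [hbcoe]
          simpa using (bU i).2
        rw [(hUmem _).mp hbs]
        simp [Fin.val_succ]
    exact ⟨L.toContinuousLinearEquiv, lam, hlamk, fun c' => hAL c'⟩
  -- the fold
  set Φ : Cn (p+2) → Cn (p+2) := fun x => Lc.symm (ψ x) with hΦdef
  have hΦ0 : Φ 0 = 0 := by rw [hΦdef]; simp only; rw [hψ0, map_zero]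
  have hΦa : AnalyticAt ℂ Φ 0 := by
    have h1 : AnalyticAt ℂ (⇑(Lc.symm : Cn (p+2) →L[ℂ] Cn (p+2))) (ψ 0) :=
      (Lc.symm : Cn (p+2) →L[ℂ] Cn (p+2)).analyticAt _
    exact h1.comp hψa
  have hΦd : HasFDerivAt Φ (Lc.symm : Cn (p+2) →L[ℂ] Cn (p+2)) 0 := by
    have h1 : HasFDerivAt (⇑(Lc.symm : Cn (p+2) →L[ℂ] Cn (p+2)))
        (Lc.symm : Cn (p+2) →L[ℂ] Cn (p+2)) (ψ 0) :=
      (Lc.symm : Cn (p+2) →L[ℂ] Cn (p+2)).hasFDerivAt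
    have := h1.comp 0 hψd
    simpa using this
  have hΦφ : ∀ᶠ x in nhds (0:Cn (p+2)), Φ (φ x)
      = (fun i : Fin (p+2) => if (i:ℕ) = 0 then lam * Φ x i else Φ x i) := by
    filter_upwards [hψφ] with x hx
    show Lc.symm (ψ (φ x)) = _
    rw [hx]
    have h1 : ψ x = Lc (Lc.symm (ψ x)) := (Lc.apply_symm_apply _).symm
    rw [h1, hAL (Lc.symm (ψ x)), Lc.symm_apply_apply]
  have hcanon0 : canonFold (p+2) (m+2) 0 = 0 := by
    funext i
    simp only [canonFold, Pi.zero_apply]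
    split <;> simp
  have hcanona : ∀ y, AnalyticAt ℂ (canonFold (p+2) (m+2)) y := by
    intro y
    apply AnalyticAt.pi
    intro i
    simp only [canonFold]
    by_cases hi : (i:ℕ) = 0
    · simp only [hi, if_pos]
      have hp : AnalyticAt ℂ (fun x : Cn (p+2) => x i) y :=
        (ContinuousLinearMap.proj (R := ℂ) (φ := fun _ : Fin (p+2) => ℂ) i).analyticAt y
      exact hp.pow _
    · simp only [hi, if_neg, ite_false]
      exact (ContinuousLinearMap.proj (R := ℂ) (φ := fun _ : Fin (p+2) => ℂ) i).analyticAt y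
  have hcanonΛ : ∀ z : Cn (p+2),
      canonFold (p+2) (m+2) (fun i => if (i:ℕ) = 0 then lam * z i else z i)
        = canonFold (p+2) (m+2) z := by
    intro z
    funext i
    simp only [canonFold]
    by_cases hi : (i:ℕ) = 0
    · simp only [hi, if_pos, ite_true]
      rw [mul_pow, hlamk, one_mul]
    · simp only [hi, if_neg, ite_false]
  set f : Cn (p+2) → Cn (p+2) := fun x => canonFold (p+2) (m+2) (Φ x) with hfdef
  have hf0 : f 0 = 0 := by rw [hfdef]; simp only; rw [hΦ0, hcanon0]
  have hfa : AnalyticAt ℂ f 0 := (hcanona (Φ 0)).comp hΦa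
  obtain ⟨h, hbih, hrt, hlt⟩ := exists_local_inverse hΦ0 hΦa Lc.symm hΦd.fderiv
  refine ⟨f, ⟨⟨hf0, hfa.eventually_analyticAt⟩, h, id, hbih, ?_, ?_⟩, ?_⟩
  · -- IsBiholGerm id
    refine ⟨⟨rfl, Eventually.of_forall fun x => analyticAt_id⟩, ?_⟩
    rw [fderiv_id, ← ContinuousLinearMap.one_def]
    exact isUnit_one
  · -- GermEq (f ∘ h) (id ∘ canonFold)
    filter_upwards [hrt] with z hz
    show f (h z) = id (canonFold (p+2) (m+2) z)
    rw [hfdef]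
    simp only [id_eq]
    rw [hz]
  · -- GermEq (f ∘ φ) f
    filter_upwards [hΦφ] with x hx
    show f (φ x) = f x
    rw [hfdef]
    simp only
    rw [hx, hcanonΛ]
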